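/- Let $K$ be a finite set and let $r_k, s_k \in \mathbb{R}$ for $k \in K$. Let $A_K$ be the $2^{|K|} \times 2^{|K|}$ matrix indexed by subsets $I, J \subseteq K$ with entries $(A_K)_{I,J} = \prod_{k \in I \cap J} s_k \cdot \prod_{k \in I \setminus J} r_k$. Then $\det A_K = \prod_{k \in K} (s_k - r_k)^{2^{|K|-1}}$. -/

import Mathlib

open Finset

private lemma prod_option_split {α : Type*} [DecidableEq (Option α)] (T : Finset (Option α))
    (f : Option α → ℝ) :
    ∏ k ∈ T, f k = (if none ∈ T then f none else 1) * ∏ a ∈ eraseNone T, f (some a) := by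
  have h1 : ∏ k ∈ T.erase none, f k = ∏ a ∈ eraseNone T, f (some a) := by
    rw [← Finset.map_some_eraseNone T, Finset.prod_map]
    exact Finset.prod_congr rfl fun a _ => rfl
  rw [← h1]
  by_cases h : none ∈ T
  · rw [if_pos h, Finset.mul_prod_erase T f h]
  · rw [if_neg h, one_mul, Finset.erase_eq_of_notMem h]

private lemma eraseNone_sdiff {α : Type*} [DecidableEq (Option α)] [DecidableEq α]
    (s t : Finset (Option α)) :
    eraseNone (s \ t) = eraseNone s \ eraseNone t := by
  ext a; simp [Finset.mem_eraseNone, Finset.mem_sdiff]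

private lemma mapSdiffAux {α β : Type*} [DecidableEq α] [DecidableEq β] (f : α ↪ β)
    (s t : Finset α) : (s \ t).map f = s.map f \ t.map f := by
  simp only [Finset.map_eq_image]
  exact Finset.image_sdiff s t f.injective

private theorem key : ∀ (K : Type u) [Fintype K] [DecidableEq K], ∀ (r s : K → ℝ),
    Matrix.det (fun I J : Finset K => (∏ k ∈ I ∩ J, s k) * ∏ k ∈ I \ J, r k) =
      ∏ k : K, (s k - r k) ^ (2 ^ (Fintype.card K - 1)) := by
  refine Fintype.induction_empty_option ?_ ?_ ?_
  · -- transport along an equivalence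
    intro α β _ e hα dβ r s
    letI : Fintype α := Fintype.ofEquiv β e.symm
    letI : DecidableEq α := e.decidableEq
    have h := hα (r ∘ e) (s ∘ e)
    have hM : Matrix.det (fun I J : Finset β => (∏ k ∈ I ∩ J, s k) * ∏ k ∈ I \ J, r k) =
        Matrix.det (fun I J : Finset α =>
            (∏ k ∈ I ∩ J, (s ∘ e) k) * ∏ k ∈ I \ J, (r ∘ e) k) := by
      rw [← Matrix.det_reindex_self e.finsetCongr
        (fun I J : Finset α => (∏ k ∈ I ∩ J, (s ∘ e) k) * ∏ k ∈ I \ J, (r ∘ e) k)]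
      congr 1
      ext I J
      erw [Matrix.reindex_apply, Matrix.submatrix_apply]
      simp only [Equiv.finsetCongr_symm, Equiv.finsetCongr_apply]
      rw [← Finset.map_inter, ← mapSdiffAux, Finset.prod_map, Finset.prod_map]
      simp
    rw [hM, h, ← Equiv.prod_comp e
      (fun k => (s k - r k) ^ (2 ^ (Fintype.card β - 1)))]
    have : Fintype.card α = Fintype.card β := Fintype.card_congr e
    simp [this]
  · -- empty case
    intro _ r s
    erw [Matrix.det_unique]
    simp [Finset.eq_empty_of_isEmpty (default : Finset PEmpty)]
  · -- option case
    intro α _ hα d r s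
    letI : DecidableEq α := fun a b => decidable_of_iff _ Option.some_inj
    have h := hα (fun a => r (some a)) (fun a => s (some a))
    set c := Fintype.card α with hc
    let E : Finset (Option α) ≃ Fin 2 × Finset α :=
      { toFun := fun I => (if none ∈ I then 1 else 0, eraseNone I)
        invFun := fun p => if p.1 = 1 then insertNone p.2 else p.2.map Function.Embedding.some
        left_inv := by
          intro I
          by_cases hI : none ∈ I
          · simp only [hI, if_pos, if_pos rfl]
            rw [Finset.insertNone_eraseNone, Finset.insert_eq_self.2 hI]
          · simp only [hI, ite_false, show (0 : Fin 2) ≠ 1 by decide, if_neg]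
            rw [Finset.map_some_eraseNone, Finset.erase_eq_of_notMem hI]
        right_inv := by
          rintro ⟨i, I⟩
          fin_cases i
          · simp only [show (0 : Fin 2) ≠ 1 by decide, if_neg, Prod.mk.injEq]
            refine ⟨?_, Finset.eraseNone_map_some I⟩
            simp
          · simp [Finset.eraseNone_insertNone] }
    let B : Matrix (Fin 2) (Fin 2) ℝ := !![1, 1; r none, s none]
    let A : Matrix (Finset α) (Finset α) ℝ :=
      fun I J => (∏ k ∈ I ∩ J, s (some k)) * ∏ k ∈ I \ J, r (some k)
    have hM : Matrix.det (fun I J : Finset (Option α) =>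
        (∏ k ∈ I ∩ J, s k) * ∏ k ∈ I \ J, r k) =
        Matrix.det (Matrix.kroneckerMap (· * ·) B A) := by
      rw [← Matrix.det_reindex_self E.symm (Matrix.kroneckerMap (· * ·) B A)]
      congr 1
      ext I J
      simp only [Matrix.reindex_apply, Matrix.submatrix_apply, Equiv.symm_symm,
        Matrix.kroneckerMap_apply]
      show _ = B (if none ∈ I then 1 else 0) (if none ∈ J then 1 else 0) *
        A (eraseNone I) (eraseNone J)
      rw [prod_option_split (I ∩ J) s, prod_option_split (I \ J) r,
        Finset.eraseNone_inter, eraseNone_sdiff]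
      have hB : B (if none ∈ I then 1 else 0) (if none ∈ J then 1 else 0) =
          (if none ∈ I ∩ J then s none else 1) * (if none ∈ I \ J then r none else 1) := by
        by_cases hI : none ∈ I <;> by_cases hJ : none ∈ J <;>
          simp [B, hI, hJ]
      rw [hB]
      show _ * _ = _ * (_ * _)
      ring
    rw [hM, Matrix.det_kronecker]
    have hdetB : B.det = s none - r none := by
      show Matrix.det !![(1:ℝ), 1; r none, s none] = _
      rw [Matrix.det_fin_two_of]; ring
    have hcard : Fintype.card (Finset α) = 2 ^ c := Fintype.card_finset
    have hcardO : Fintype.card (Option α) = c + 1 := Fintype.card_option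
    rw [hdetB, h, hcard, Fintype.card_fin, hcardO, Fintype.prod_option]
    simp only [Nat.add_sub_cancel]
    congr 1
    rw [← Finset.prod_pow]
    rcases isEmpty_or_nonempty α with hα' | hα'
    · simp [Finset.univ_eq_empty]
    · have hc1 : 1 ≤ c := Fintype.card_pos
      refine Finset.prod_congr rfl fun k _ => ?_
      rw [← pow_mul]
      congr 1
      have h2 : c - 1 + 1 = c := Nat.succ_pred_eq_of_pos hc1
      conv_rhs => rw [← h2]
      rw [pow_succ]

open Finset in
theorem det_box_vertex_matrix (K : Type*) [Fintype K] [DecidableEq K]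
    (r s : K → ℝ) :
    Matrix.det (fun I J : Finset K => (∏ k ∈ I ∩ J, s k) * ∏ k ∈ I \ J, r k) =
      ∏ k : K, (s k - r k) ^ (2 ^ (Fintype.card K - 1)) := by
  exact key K r s
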